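/- For n ≥ 1, the number of n-element subsets D ⊆ {1, …, 2n} with ∑_{d ∈ D} d ≡ 0 (mod n) equals 2·Nₙ, where Nₙ is the number of n-element subsets of {1, …, 2n−1} whose sum is ≡ 0 (mod n). -/

import Mathlib

open Finset

/-- `N n`: the number of `n`-element subsets of `{1,…,2n−1}` with sum divisible by `n`. -/
noncomputable def N (n : ℕ) : ℕ :=
  Nat.card {D : Finset ℕ // D ⊆ Finset.Icc 1 (2 * n - 1) ∧ D.card = n ∧ (∑ d ∈ D, d) % n = 0}

instance finiteSubsets (s : Finset ℕ) (p : Finset ℕ → Prop) :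
    Finite {D : Finset ℕ // D ⊆ s ∧ p D} := by
  apply Finite.of_injective
    (fun D => (⟨D.1, Finset.mem_powerset.2 D.2.1⟩ : {x // x ∈ s.powerset}))
  intro a b h
  simp only [Subtype.mk.injEq] at h
  exact Subtype.ext h

lemma mod_zero_of_dvd {n a : ℕ} (h : n ∣ a) : a % n = 0 := by
  obtain ⟨k, rfl⟩ := h; exact Nat.mul_mod_right n k

lemma sum_Icc_one_mul_two (m : ℕ) : (∑ i ∈ Icc 1 m, i) * 2 = m * (m + 1) := by
  have hr : range (m + 1) = insert 0 (Icc 1 m) := by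
    ext x; simp [Finset.mem_Icc]; omega
  have h := Finset.sum_range_id_mul_two (m + 1)
  rw [hr, Finset.sum_insert (by simp)] at h
  simpa [Nat.mul_comm] using h

/-- There are `2Nₙ` many `n`-element subsets of `{1,…,2n}` with sum `≡ 0 (mod n)`. -/
theorem card_bridges_sum_mod_eq_two_N (n : ℕ) (hn : 1 ≤ n) :
    Nat.card {D : Finset ℕ //
        D ⊆ Finset.Icc 1 (2 * n) ∧ D.card = n ∧ (∑ d ∈ D, d) % n = 0} = 2 * N n := by
  classical
  set s := Finset.Icc 1 (2 * n - 1) with hs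
  have hcs : s.card = 2 * n - 1 := by simp [hs]
  have h2ns : 2 * n ∉ s := by simp [hs, Finset.mem_Icc]; omega
  have hins : Finset.Icc 1 (2 * n) = insert (2 * n) s := by
    ext x; simp [hs, Finset.mem_Icc]; omega
  have hsumval : ∑ i ∈ s, i = (2 * n - 1) * n := by
    have h := sum_Icc_one_mul_two (2 * n - 1)
    rw [show 2 * n - 1 + 1 = 2 * n by omega] at h
    have h2 : (2 * n - 1) * (2 * n) = ((2 * n - 1) * n) * 2 := by ring
    rw [h2] at h
    exact Nat.eq_of_mul_eq_mul_right (by norm_num) h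
  have hsumdvd : n ∣ ∑ i ∈ s, i := hsumval ▸ Dvd.intro_left _ rfl
  have e : {D : Finset ℕ //
        D ⊆ Finset.Icc 1 (2 * n) ∧ D.card = n ∧ (∑ d ∈ D, d) % n = 0} ≃
      ({D : Finset ℕ // D ⊆ s ∧ D.card = n ∧ (∑ d ∈ D, d) % n = 0} ⊕
       {D : Finset ℕ // D ⊆ s ∧ D.card = n ∧ (∑ d ∈ D, d) % n = 0}) := by
    refine
      { toFun := fun D =>
          if h : 2 * n ∈ D.1 then Sum.inr ⟨s \ D.1.erase (2 * n), ?_⟩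
          else Sum.inl ⟨D.1, ?_, D.2.2.1, D.2.2.2⟩
        invFun := fun x =>
          match x with
          | Sum.inl D => ⟨D.1, fun y hy => ?_, D.2.2.1, D.2.2.2⟩
          | Sum.inr E => ⟨insert (2 * n) (s \ E.1), ?_⟩
        left_inv := ?_
        right_inv := ?_ }
    case refine_1 =>
      obtain ⟨D, hsub, hcard, hmod⟩ := D
      have herase : D.erase (2 * n) ⊆ s := by
        intro x hx
        have hx1 := Finset.mem_of_mem_erase hx
        have hx2 := Finset.ne_of_mem_erase hx
        have := hsub hx1
        simp only [hs, Finset.mem_Icc] at this ⊢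
        omega
      have hce : (D.erase (2 * n)).card = n - 1 := by
        rw [Finset.card_erase_of_mem h, hcard]
      refine ⟨Finset.sdiff_subset, ?_, ?_⟩
      · rw [Finset.card_sdiff_of_subset herase, hcs, hce]; omega
      · have hsd : ∑ i ∈ s \ D.erase (2 * n), i + ∑ i ∈ D.erase (2 * n), i
            = ∑ i ∈ s, i := Finset.sum_sdiff herase
        have h1 : ∑ i ∈ D.erase (2 * n), i + 2 * n = ∑ i ∈ D, i :=
          Finset.sum_erase_add D _ h
        have h2 : n ∣ ∑ i ∈ D, i := Nat.dvd_of_mod_eq_zero hmod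
        have h3 : n ∣ ∑ i ∈ D.erase (2 * n), i := by
          have := Nat.dvd_sub h2 (dvd_mul_left n 2)
          rwa [show (∑ i ∈ D, i) - 2 * n = ∑ i ∈ D.erase (2 * n), i by omega] at this
        have h4 : n ∣ ∑ i ∈ s \ D.erase (2 * n), i := by
          have := Nat.dvd_sub hsumdvd h3
          rwa [show (∑ i ∈ s, i) - ∑ i ∈ D.erase (2 * n), i
              = ∑ i ∈ s \ D.erase (2 * n), i by omega] at this
        exact mod_zero_of_dvd h4
    case refine_2 =>
      intro x hx
      have := D.2.1 hx
      rw [hins, Finset.mem_insert] at this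
      rcases this with h1 | h1
      · exact absurd (h1 ▸ hx) h
      · exact h1
    case refine_3 =>
      have := D.2.1 hy
      simp only [hs, Finset.mem_Icc] at this ⊢
      omega
    case refine_4 =>
      obtain ⟨E, hsub, hcard, hmod⟩ := E
      have h2nE : 2 * n ∉ s \ E := fun h => h2ns (Finset.mem_sdiff.1 h).1
      refine ⟨?_, ?_, ?_⟩
      · rw [hins]
        exact Finset.insert_subset_insert _ Finset.sdiff_subset
      · rw [Finset.card_insert_of_notMem h2nE, Finset.card_sdiff_of_subset hsub, hcs, hcard]
        omega
      · rw [Finset.sum_insert h2nE]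
        have hsd : ∑ i ∈ s \ E, i + ∑ i ∈ E, i = ∑ i ∈ s, i := Finset.sum_sdiff hsub
        have h2 : n ∣ ∑ i ∈ E, i := Nat.dvd_of_mod_eq_zero hmod
        have h3 : n ∣ ∑ i ∈ s \ E, i := by
          have := Nat.dvd_sub hsumdvd h2
          rwa [show (∑ i ∈ s, i) - ∑ i ∈ E, i = ∑ i ∈ s \ E, i by omega] at this
        exact mod_zero_of_dvd (dvd_add (dvd_mul_left n 2) h3)
    case refine_5 =>
      rintro ⟨D, hsub, hcard, hmod⟩
      by_cases h : 2 * n ∈ D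
      · simp only [dif_pos h]
        apply Subtype.ext
        have herase : D.erase (2 * n) ⊆ s := by
          intro x hx
          have hx1 := Finset.mem_of_mem_erase hx
          have hx2 := Finset.ne_of_mem_erase hx
          have := hsub hx1
          simp only [hs, Finset.mem_Icc] at this ⊢
          omega
        show insert (2 * n) (s \ (s \ D.erase (2 * n))) = D
        rw [Finset.sdiff_sdiff_eq_self herase, Finset.insert_erase h]
      · simp only [dif_neg h]
    case refine_6 =>
      rintro (⟨D, hsub, hcard, hmod⟩ | ⟨E, hsub, hcard, hmod⟩)
      · have h : 2 * n ∉ D := fun h => h2ns (hsub h)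
        simp only [dif_neg h]
      · have h2nE : 2 * n ∉ s \ E := fun h => h2ns (Finset.mem_sdiff.1 h).1
        have h : 2 * n ∈ insert (2 * n) (s \ E) := Finset.mem_insert_self _ _
        simp only [dif_pos h]
        congr 1
        apply Subtype.ext
        show s \ (insert (2 * n) (s \ E)).erase (2 * n) = E
        rw [Finset.erase_insert h2nE, Finset.sdiff_sdiff_eq_self hsub]
  rw [Nat.card_congr e, Nat.card_sum, two_mul]
  rfl
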